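/- Let Z = Exh_φ be a Borel P-ideal on ℕ for a lower semicontinuous submeasure φ, with r_k = φ({k}) and U_n = {k : r_k ≤ 1/n}. Suppose there exists ε > 0 with φ(U_m) > ε for all m. Then there exists a set W ⊆ ℕ with W ∉ Z such that r_k → 0 along k ∈ W (i.e., for every δ > 0, all but finitely many k ∈ W satisfy r_k < δ). -/

import Mathlib

open scoped ENNReal

/-- Let `Z = Exh_φ` for a lower semicontinuous submeasure `φ` on `ℕ`, with
`r_k = φ({k})` and `U_n = {k : r_k ≤ 1/n}` (with `U_0 = ℕ`). If there is
`ε > 0` with `φ(U_m) > ε` for all `m`, then there is `W ∉ Z` such that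
`r_k → 0` along `k ∈ W`: for every `δ > 0` all but finitely many `k ∈ W`
satisfy `r_k < δ`. -/
theorem exists_W_not_in_exh_with_rk_to_zero
    (φ : Set ℕ → ℝ≥0∞)
    (hempty : φ ∅ = 0)
    (hsingleton : ∀ a : ℕ, φ {a} < ⊤)
    (hmono : ∀ x y : Set ℕ, φ x ≤ φ (x ∪ y))
    (hsubadd : ∀ x y : Set ℕ, φ (x ∪ y) ≤ φ x + φ y)
    (hlsc : ∀ x : Set ℕ, φ x = ⨆ n : ℕ, φ (x ∩ Set.Iio n))
    (U : ℕ → Set ℕ)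
    (hU0 : U 0 = Set.univ)
    (hU : ∀ n : ℕ, 0 < n → U n = {k : ℕ | φ {k} ≤ 1 / (n : ℝ≥0∞)})
    (ε : ℝ≥0∞) (hε : 0 < ε) (hbig : ∀ m : ℕ, ε < φ (U m)) :
    ∃ W : Set ℕ,
      (⨅ n : ℕ, φ (W ∩ Set.Ici n)) ≠ 0 ∧
      ∀ δ : ℝ≥0∞, 0 < δ → {k ∈ W | ¬ φ {k} < δ}.Finite := by
  classical
  have hmono' : ∀ x y : Set ℕ, x ⊆ y → φ x ≤ φ y := by
    intro x y h
    have := hmono x y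
    rwa [Set.union_eq_self_of_subset_left h] at this
  have hεtop : ε ≠ ⊤ := (lt_of_lt_of_le (hbig 0) le_top).ne
  have hhalf0 : ε / 2 ≠ 0 := by
    simp [ENNReal.div_eq_zero_iff, hε.ne']
  have hhalftop : ε / 2 ≠ ⊤ := by
    simp [ENNReal.div_eq_top, hεtop]
  -- cardinality bound
  have hcard : ∀ (c : ℝ≥0∞) (s : Set ℕ), (∀ k ∈ s, φ {k} ≤ c) →
      ∀ N : ℕ, φ (s ∩ Set.Iio N) ≤ N * c := by
    intro c s hs N
    induction N with
    | zero =>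
      have h0 : s ∩ Set.Iio (0:ℕ) = ∅ := by ext k; simp
      simp [h0, hempty]
    | succ N ih =>
      have hsplit : s ∩ Set.Iio (N+1 : ℕ) = (s ∩ Set.Iio N) ∪ (s ∩ {N}) := by
        ext k
        simp only [Set.mem_inter_iff, Set.mem_Iio, Set.mem_union, Set.mem_singleton_iff,
          Nat.lt_succ_iff_lt_or_eq]
        tauto
      have hNc : φ (s ∩ {N}) ≤ c := by
        by_cases hN : N ∈ s
        · have : s ∩ {N} = {N} := by ext k; simp; rintro rfl; exact hN
          rw [this]; exact hs N hN
        · have : s ∩ {N} = ∅ := by ext k; simp; rintro hk rfl; exact hN hk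
          simp [this, hempty]
      calc φ (s ∩ Set.Iio (N+1 : ℕ)) = φ ((s ∩ Set.Iio N) ∪ (s ∩ {N})) := by rw [hsplit]
        _ ≤ φ (s ∩ Set.Iio N) + φ (s ∩ {N}) := hsubadd _ _
        _ ≤ N * c + c := add_le_add ih hNc
        _ = (N + 1 : ℕ) * c := by push_cast; ring
  -- the key step
  have key : ∀ (j N : ℕ), ∃ p : ℕ × ℕ,
      j ≤ p.1 ∧ 1 ≤ p.1 ∧ N < p.2 ∧ ε / 2 < φ (U p.1 ∩ Set.Ico N p.2) := by
    intro j N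
    set c : ℝ≥0∞ := ε / 2 / (N + 1 : ℕ) with hc
    have hc0 : c ≠ 0 := by
      rw [hc]
      simp [ENNReal.div_eq_zero_iff, hhalf0]
    obtain ⟨m0, hm0⟩ := ENNReal.exists_inv_nat_lt hc0
    set m : ℕ := max (max j 1) m0 with hm
    have hm1 : 1 ≤ m := le_trans (le_max_right j 1) (le_max_left _ m0)
    have hsing : ∀ k ∈ U m, φ {k} ≤ c := by
      intro k hk
      rw [hU m (by omega)] at hk
      refine hk.trans ?_
      have h1 : (1 : ℝ≥0∞) / m ≤ 1 / m0 := by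
        gcongr
        exact_mod_cast le_max_right _ m0
      refine h1.trans ?_
      rw [one_div]
      exact hm0.le
    have hlow : φ (U m ∩ Set.Iio N) ≤ ε / 2 := by
      calc φ (U m ∩ Set.Iio N) ≤ N * c := hcard c (U m) hsing N
        _ ≤ (N + 1 : ℕ) * c := by gcongr; exact_mod_cast Nat.le_succ N
        _ = ε / 2 := by
            rw [hc]
            refine ENNReal.mul_div_cancel' ?_ ?_ <;> simp
    have htail : ε / 2 < φ (U m ∩ Set.Ici N) := by
      have hsplitU : U m = (U m ∩ Set.Iio N) ∪ (U m ∩ Set.Ici N) := by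
        rw [← Set.inter_union_distrib_left, Set.Iio_union_Ici, Set.inter_univ]
      have h1 : ε < φ (U m ∩ Set.Iio N) + φ (U m ∩ Set.Ici N) := by
        refine lt_of_lt_of_le (hbig m) ?_
        conv_lhs => rw [hsplitU]
        exact hsubadd _ _
      by_contra h
      push_neg at h
      have h2 : ε < ε / 2 + ε / 2 := h1.trans_le (add_le_add hlow h)
      rw [ENNReal.add_halves] at h2
      exact lt_irrefl _ h2
    have hex : ∃ n, ε / 2 < φ ((U m ∩ Set.Ici N) ∩ Set.Iio n) := by
      by_contra h
      push_neg at h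
      have : φ (U m ∩ Set.Ici N) ≤ ε / 2 := by
        rw [hlsc (U m ∩ Set.Ici N)]; exact iSup_le h
      exact absurd htail (not_lt.2 this)
    obtain ⟨n, hn⟩ := hex
    refine ⟨(m, max n (N + 1)), le_trans (le_max_left j 1) (le_max_left _ m0), hm1,
      lt_of_lt_of_le (Nat.lt_succ_self N) (le_max_right n (N+1)), ?_⟩
    refine hn.trans_le (hmono' _ _ ?_)
    rintro k ⟨⟨hk1, hk2⟩, hk3⟩
    exact ⟨hk1, hk2, lt_of_lt_of_le hk3 (le_max_left _ _)⟩
  choose p hp1 hp2 hp3 hp4 using key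
  -- recursive sequence of cut points
  set s : ℕ → ℕ := fun j => Nat.rec 0 (fun i N => (p i N).2) j with hs
  have hs0 : s 0 = 0 := rfl
  have hssucc : ∀ j, s (j + 1) = (p j (s j)).2 := fun j => rfl
  set M : ℕ → ℕ := fun j => (p j (s j)).1 with hM
  set F : ℕ → Set ℕ := fun j => U (M j) ∩ Set.Ico (s j) (s (j + 1)) with hF
  have hsmono : StrictMono s := by
    apply strictMono_nat_of_lt_succ
    intro j
    rw [hssucc]
    exact hp3 j (s j)
  have hsle : ∀ j, j ≤ s j := fun j => hsmono.le_apply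
  have hφF : ∀ j, ε / 2 < φ (F j) := by
    intro j
    rw [hF]
    exact hp4 j (s j)
  refine ⟨⋃ j, F j, ?_, ?_⟩
  · -- infimum nonzero
    have hlb : ∀ N : ℕ, ε / 2 ≤ φ ((⋃ j, F j) ∩ Set.Ici N) := by
      intro N
      refine le_trans (hφF N).le (hmono' _ _ ?_)
      intro k hk
      refine ⟨Set.mem_iUnion.2 ⟨N, hk⟩, ?_⟩
      exact le_trans (hsle N) hk.2.1
    have : ε / 2 ≤ ⨅ n : ℕ, φ ((⋃ j, F j) ∩ Set.Ici n) := le_iInf hlb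
    intro h
    rw [h] at this
    exact hhalf0 (le_antisymm this zero_le)
  · -- convergence to zero along W
    intro δ hδ
    obtain ⟨j, hj⟩ := ENNReal.exists_inv_nat_lt hδ.ne'
    refine Set.Finite.subset (Set.finite_Iio (s j)) ?_
    rintro k ⟨hkW, hkδ⟩
    by_contra hk
    simp only [Set.mem_Iio, not_lt] at hk
    obtain ⟨i, hiU, hi1, hi2⟩ := Set.mem_iUnion.1 hkW
    -- k < s (i+1) and s j ≤ k, so j ≤ i
    have hji : j ≤ i := by
      by_contra hji
      push_neg at hji
      have h1 : i + 1 ≤ j := by omega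
      have h2 : s (i + 1) ≤ s j := hsmono.monotone h1
      omega
    have hMi : j ≤ M i := le_trans hji (hp1 i (s i))
    have hMi1 : 1 ≤ M i := hp2 i (s i)
    rw [hU (M i) (by omega)] at hiU
    apply hkδ
    calc φ {k} ≤ 1 / (M i : ℝ≥0∞) := hiU
      _ ≤ 1 / (j : ℝ≥0∞) := by
          gcongr
      _ < δ := by rw [one_div]; exact hj
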